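/- For d ≥ 3, b ∈ ℝ^d, and x ∈ ℝ^d \ {0}, the function η₀(x) = e^{⟨b,x⟩}/((d-2) ω_d ‖x‖^{d-2}) satisfies (-Δ + 2b·∇ + κ²) η₀ = 0 on ℝ^d \ {0}, provided κ² + ‖b‖² = 0 (i.e., κ² = -‖b‖²). -/

import Mathlib

open Real

/-- For `d ≥ 3`, `κ² + ‖b‖² = 0`, the function
`η₀(x) = e^{⟨b,x⟩}/((d-2) ω_d ‖x‖^{d-2})`, with `ω_d = 2π^{d/2}/Γ(d/2)` the surface area
of the unit sphere, satisfies `(-Δ + 2b·∇ + κ²) η₀ = 0` on `ℝ^d \ {0}`. -/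
theorem advection_diffusion_fundamental
    (d : ℕ) (hd : 3 ≤ d) (b : EuclideanSpace ℝ (Fin d)) (kappaSq : ℝ)
    (hk : kappaSq + ‖b‖ ^ 2 = 0)
    (omega : ℝ)
    (homega : omega = 2 * Real.pi ^ ((d : ℝ) / 2) / Real.Gamma ((d : ℝ) / 2))
    (eta : EuclideanSpace ℝ (Fin d) → ℝ)
    (heta : ∀ y : EuclideanSpace ℝ (Fin d),
      eta y = Real.exp (inner ℝ b y) / (((d : ℝ) - 2) * omega * ‖y‖ ^ ((d : ℝ) - 2)))
    (x : EuclideanSpace ℝ (Fin d)) (hx : x ≠ 0) :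
    -(∑ i : Fin d,
        deriv (deriv (fun t : ℝ => eta (x + t • EuclideanSpace.single i (1 : ℝ)))) 0)
      + 2 * (∑ i : Fin d,
          b i * deriv (fun t : ℝ => eta (x + t • EuclideanSpace.single i (1 : ℝ))) 0)
      + kappaSq * eta x = 0 := by
  have hd' : (3:ℝ) ≤ (d:ℝ) := by exact_mod_cast hd
  have homega_pos : 0 < omega := by
    rw [homega]
    have h1 : 0 < Real.pi ^ ((d:ℝ)/2) := Real.rpow_pos_of_pos Real.pi_pos _
    have h2 : 0 < Real.Gamma ((d:ℝ)/2) := Real.Gamma_pos_of_pos (by positivity)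
    positivity
  set K : ℝ := ((d:ℝ) - 2) * omega with hK_def
  have hK : K ≠ 0 := ne_of_gt (mul_pos (by linarith) homega_pos)
  set s : ℝ := (2 - (d:ℝ))/2 with hs_def
  set a : ℝ := ‖x‖^2 with ha_def
  have ha : a ≠ 0 := by
    rw [ha_def]
    exact pow_ne_zero _ (norm_ne_zero_iff.mpr hx)
  set c : ℝ := (inner ℝ b x : ℝ) with hc_def
  -- rewrite eta in rpow-of-norm-squared form
  have hetaS : ∀ y : EuclideanSpace ℝ (Fin d),
      eta y = Real.exp ((inner ℝ b y : ℝ)) * ((‖y‖^2 : ℝ)) ^ s / K := by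
    intro y
    have hdiv : ∀ (e A : ℝ), e / (K * A) = e * A⁻¹ / K := by
      intro e A
      rw [mul_comm K A, ← div_div, div_eq_mul_inv e]
    rw [heta y]
    have hy : ‖y‖ ^ ((d:ℝ) - 2) = ((‖y‖^2 : ℝ)) ^ (((d:ℝ)-2)/2) := by
      rw [← Real.rpow_natCast ‖y‖ 2, ← Real.rpow_mul (norm_nonneg y)]
      congr 1
      push_cast
      ring
    rw [hy, hdiv, hs_def, show (2 - (d:ℝ))/2 = -(((d:ℝ)-2)/2) by ring,
      Real.rpow_neg (by positivity)]
  have hx0 : eta x = Real.exp c * a ^ s / K := by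
    rw [hetaS x, ← ha_def, ← hc_def]
  -- per-coordinate derivative computations
  have main : ∀ i : Fin d,
      deriv (fun t : ℝ => eta (x + t • EuclideanSpace.single i (1 : ℝ))) 0
        = Real.exp c * (b i * a ^ s + 2 * x i * s * a ^ (s-1)) / K ∧
      deriv (deriv (fun t : ℝ => eta (x + t • EuclideanSpace.single i (1 : ℝ)))) 0
        = Real.exp c * ((b i)^2 * a ^ s + 4 * b i * x i * s * a^(s-1)
            + 4 * (x i)^2 * s * (s-1) * a^(s-2) + 2 * s * a^(s-1)) / K := by
    intro i
    set m := x i with hm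
    set β := b i with hβ
    set q : ℝ → ℝ := fun t => a + 2*m*t + t^2 with hq_def
    have hq0 : q 0 = a := by simp [hq_def]
    have hq0' : q 0 ≠ 0 := by rw [hq0]; exact ha
    have hqd : ∀ t : ℝ, HasDerivAt q (2*m + 2*t) t := by
      intro t
      have h : HasDerivAt q _ t := (((hasDerivAt_id' (x := t)).const_mul (2*m)).const_add a).add
        (hasDerivAt_pow 2 t)
      convert h using 1
      push_cast
      ring
    have hexp : ∀ t : ℝ, HasDerivAt (fun u : ℝ => Real.exp (c + β*u))
        (Real.exp (c + β*t) * β) t := by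
      intro t
      have h : HasDerivAt (fun u : ℝ => c + β*u) β t := by
        simpa using ((hasDerivAt_id' (x := t)).const_mul β).const_add c
      simpa using h.exp
    have hφd : ∀ t : ℝ, q t ≠ 0 →
        HasDerivAt (fun u : ℝ => Real.exp (c + β*u) * q u ^ s / K)
          (Real.exp (c + β*t) * (β * q t ^ s + s * q t ^ (s-1) * (2*m + 2*t)) / K) t := by
      intro t ht
      have hqs : HasDerivAt (fun u => q u ^ s) ((2*m+2*t) * s * q t ^ (s-1)) t :=
        (hqd t).rpow_const (Or.inl ht)
      have h : HasDerivAt (fun u : ℝ => Real.exp (c + β*u) * q u ^ s / K) _ t :=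
        ((hexp t).mul hqs).div_const K
      convert h using 1
      ring
    have hfun : (fun t : ℝ => eta (x + t • EuclideanSpace.single i (1:ℝ)))
        = fun t : ℝ => Real.exp (c + β*t) * q t ^ s / K := by
      funext t
      rw [hetaS]
      have h1 : (inner ℝ b (x + t • EuclideanSpace.single i (1:ℝ)) : ℝ) = c + β * t := by
        rw [inner_add_right, real_inner_smul_right, EuclideanSpace.inner_single_right,
          hc_def, hβ]
        simp [mul_comm]
      have h2 : ‖x + t • EuclideanSpace.single i (1:ℝ)‖^2 = q t := by
        rw [norm_add_sq_real, real_inner_smul_right, EuclideanSpace.inner_single_right,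
          norm_smul, ← ha_def, hq_def]
        simp [Real.norm_eq_abs, mul_pow, sq_abs, hm]
        ring
      rw [h1, h2]
    rw [hfun]
    have hcont : Continuous q := by rw [hq_def]; fun_prop
    have hne : ∀ᶠ u in nhds (0:ℝ), q u ≠ 0 :=
      hcont.continuousAt.eventually_ne (by rw [hq0]; exact ha)
    have hEq : deriv (fun u : ℝ => Real.exp (c + β*u) * q u ^ s / K)
        =ᶠ[nhds (0:ℝ)]
        fun u => Real.exp (c + β*u) * (β * q u ^ s + s * q u ^ (s-1) * (2*m + 2*u)) / K :=
      hne.mono fun u hu => (hφd u hu).deriv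
    constructor
    · rw [(hφd 0 hq0').deriv, hq0]
      norm_num
      ring
    · rw [hEq.deriv_eq]
      have hlin : HasDerivAt (fun u : ℝ => 2*m + 2*u) 2 0 := by
        simpa using ((hasDerivAt_id' (x := (0:ℝ))).const_mul 2).const_add (2*m)
      have h1 : HasDerivAt (fun u => q u ^ s) ((2*m+2*0) * s * q 0 ^ (s-1)) 0 :=
        (hqd 0).rpow_const (Or.inl hq0')
      have h2 : HasDerivAt (fun u => q u ^ (s-1)) ((2*m+2*0) * (s-1) * q 0 ^ (s-1-1)) 0 :=
        (hqd 0).rpow_const (Or.inl hq0')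
      have hG := (h1.const_mul β).add ((h2.const_mul s).mul hlin)
      have hψ : HasDerivAt (fun u : ℝ => Real.exp (c + β*u) * (β * q u ^ s + s * q u ^ (s-1) * (2*m + 2*u)) / K) _ 0 :=
        ((hexp 0).mul hG).div_const K
      rw [hψ.deriv]
      simp only [Pi.add_apply, Pi.mul_apply, hq0]
      rw [show s - 1 - 1 = s - 2 by ring]
      norm_num
      ring
  -- component-sum identities
  have hB : ∑ i : Fin d, (b i)^2 = ‖b‖^2 := by
    rw [← real_inner_self_eq_norm_sq, PiLp.inner_apply]
    simp [RCLike.inner_apply, sq]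
  have hP : ∑ i : Fin d, (b i) * (x i) = c := by
    rw [hc_def, PiLp.inner_apply]
    simp [RCLike.inner_apply, mul_comm]
  have ha2 : ∑ i : Fin d, (x i)^2 = a := by
    rw [ha_def, ← real_inner_self_eq_norm_sq, PiLp.inner_apply]
    simp [RCLike.inner_apply, sq]
  have hsplit : ∀ (r1 r2 r3 r4 : ℝ), (∑ i : Fin d,
      ((b i)^2 * r1 + (b i * x i) * r2 + (x i)^2 * r3 + r4))
      = ‖b‖^2 * r1 + c * r2 + a * r3 + (d:ℝ) * r4 := by
    intro r1 r2 r3 r4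
    rw [Finset.sum_add_distrib, Finset.sum_add_distrib, Finset.sum_add_distrib,
        ← Finset.sum_mul, ← Finset.sum_mul, ← Finset.sum_mul, hB, hP, ha2,
        Finset.sum_const, Finset.card_univ, Fintype.card_fin, nsmul_eq_mul]
  have h2nd : (∑ i : Fin d,
        deriv (deriv (fun t : ℝ => eta (x + t • EuclideanSpace.single i (1 : ℝ)))) 0)
      = Real.exp c * (‖b‖^2 * (a^s) + c * (4*s*a^(s-1)) + a * (4*s*(s-1)*a^(s-2))
          + (d:ℝ) * (2*s*a^(s-1))) / K := by
    rw [Finset.sum_congr rfl fun i _ => (main i).2]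
    calc (∑ i : Fin d, Real.exp c * ((b i)^2 * a ^ s + 4 * b i * x i * s * a^(s-1)
            + 4 * (x i)^2 * s * (s-1) * a^(s-2) + 2 * s * a^(s-1)) / K)
        = ∑ i : Fin d, Real.exp c * ((b i)^2 * (a^s) + (b i * x i) * (4*s*a^(s-1))
            + (x i)^2 * (4*s*(s-1)*a^(s-2)) + (2*s*a^(s-1))) / K :=
          Finset.sum_congr rfl (fun i _ => by ring)
      _ = Real.exp c * (∑ i : Fin d, ((b i)^2 * (a^s) + (b i * x i) * (4*s*a^(s-1))
            + (x i)^2 * (4*s*(s-1)*a^(s-2)) + (2*s*a^(s-1)))) / K := by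
          rw [← Finset.sum_div, ← Finset.mul_sum]
      _ = _ := by rw [hsplit]
  have h1st : (∑ i : Fin d,
        b i * deriv (fun t : ℝ => eta (x + t • EuclideanSpace.single i (1 : ℝ))) 0)
      = Real.exp c * (‖b‖^2 * (a^s) + c * (2*s*a^(s-1)) + a * 0 + (d:ℝ) * 0) / K := by
    rw [Finset.sum_congr rfl fun i _ => by rw [(main i).1]]
    calc (∑ i : Fin d, b i * (Real.exp c * (b i * a ^ s + 2 * x i * s * a ^ (s-1)) / K))
        = ∑ i : Fin d, Real.exp c * ((b i)^2 * (a^s) + (b i * x i) * (2*s*a^(s-1))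
            + (x i)^2 * 0 + 0) / K :=
          Finset.sum_congr rfl (fun i _ => by ring)
      _ = Real.exp c * (∑ i : Fin d, ((b i)^2 * (a^s) + (b i * x i) * (2*s*a^(s-1))
            + (x i)^2 * 0 + 0)) / K := by
          rw [← Finset.sum_div, ← Finset.mul_sum]
      _ = _ := by rw [hsplit]
  rw [h2nd, h1st, hx0, show kappaSq = -‖b‖^2 by linarith]
  have hrel : a ^ (s-1) = a^(s-2) * a := by
    have h := Real.rpow_add_one ha (s-2)
    rw [show s-2+1 = s-1 by ring] at h
    exact h
  have hrel2 : a ^ s = a^(s-2) * a * a := by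
    have h := Real.rpow_add_one ha (s-1)
    rw [show s-1+1 = s by ring] at h
    rw [h, hrel]
  rw [hrel, hrel2, hs_def]
  ring
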